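/- For every rank-labeled tree, the size of the tree (its total number of nodes) is at least F_{r}, where r is the rank of the root and F_i denotes the i-th Fibonacci number (F_0 = 0, F_1 = 1, F_{i+2} = F_{i+1} + F_i). -/

import Mathlib

/-- `cdiv2 m` is the ceiling of `m / 2` for an integer `m`. -/
def cdiv2 (m : ℤ) : ℤ := ⌈(m : ℚ) / 2⌉

/-- A rooted tree in which every node carries an integer rank and an
ordered finite list of child subtrees. -/
inductive RTree : Type
  | node : ℤ → List RTree → RTree

/-- The rank of the root of a tree. -/
def RTree.rank : RTree → ℤ
  | .node r _ => r

mutual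
  /-- The size of a tree: its total number of nodes. -/
  def RTree.size : RTree → ℕ
    | .node _ cs => 1 + RTree.sizeList cs
  /-- The total number of nodes of a list of trees. -/
  def RTree.sizeList : List RTree → ℕ
    | [] => 0
    | t :: ts => RTree.size t + RTree.sizeList ts
end

/-- The rank of the `(i+1)`-st child from the end of the child list `cs`
(so `i = 0` gives the last child, `i = 1` the second to last), with the
convention that the rank of a missing child is `-1`. -/
def lastRank (cs : List RTree) (i : ℕ) : ℤ :=
  (cs.reverse[i]?).elim (-1) RTree.rank

/-- A rank-labeled tree: every node `z` satisfies `r_z ≥ 0` and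
`r_z ≤ ⌈(r_{z1} + r_{z2})/2⌉ + 1` where `r_{z1}`, `r_{z2}` are the ranks of the
last two children (a missing child having rank `-1`). -/
inductive RTree.Valid : RTree → Prop
  | node (r : ℤ) (cs : List RTree)
      (hr : 0 ≤ r)
      (hrank : r ≤ cdiv2 (lastRank cs 0 + lastRank cs 1) + 1)
      (hcs : ∀ t ∈ cs, RTree.Valid t) :
      RTree.Valid (RTree.node r cs)

lemma RTree.Valid.rank_nonneg {t : RTree} (h : t.Valid) : 0 ≤ t.rank := by
  cases h with | node r cs hr _ _ => exact hr

lemma sizeList_append (l1 l2 : List RTree) :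
    RTree.sizeList (l1 ++ l2) = RTree.sizeList l1 + RTree.sizeList l2 := by
  induction l1 with
  | nil => simp [RTree.sizeList]
  | cons t ts ih => simp [RTree.sizeList, ih]; omega

lemma sizeList_reverse (l : List RTree) :
    RTree.sizeList l.reverse = RTree.sizeList l := by
  induction l with
  | nil => rfl
  | cons t ts ih =>
    simp only [List.reverse_cons, sizeList_append, ih, RTree.sizeList]
    omega

lemma size_le_sizeList {t : RTree} {l : List RTree} (h : t ∈ l) :
    t.size ≤ RTree.sizeList l := by
  induction l with
  | nil => simp at h
  | cons c cs ih =>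
    rcases List.mem_cons.mp h with rfl | h
    · simp [RTree.sizeList]
    · have := ih h
      simp [RTree.sizeList]; omega

lemma size_pos (t : RTree) : 1 ≤ t.size := by
  cases t with | node r cs => simp [RTree.size]

lemma lastRank_ge (cs : List RTree) (hcs : ∀ t ∈ cs, t.Valid) (i : ℕ) :
    -1 ≤ lastRank cs i := by
  rw [lastRank]
  cases hrev : cs.reverse[i]? with
  | none => simp
  | some c =>
    have hc : c ∈ cs := List.mem_reverse.mp (List.mem_of_getElem? hrev)
    have := (hcs c hc).rank_nonneg
    simp only [Option.elim]
    omega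

lemma key' (a b r : ℤ) (hr : 0 ≤ r) (hba : b ≤ a)
    (h1 : r ≤ a + 1) (h2 : 2 * r ≤ a + b + 3) :
    Nat.fib r.toNat ≤ 1 + (Nat.fib a.toNat + Nat.fib b.toNat) := by
  by_cases hra : r ≤ a
  · have := Nat.fib_mono (show r.toNat ≤ a.toNat by omega)
    omega
  · have hr1 : r = a + 1 := by omega
    by_cases ha0 : a ≤ 0
    · have h3 : Nat.fib r.toNat ≤ Nat.fib 1 := Nat.fib_mono (by omega)
      simp only [Nat.fib_one] at h3
      omega
    · have hrt : r.toNat = (a.toNat - 1) + 2 := by omega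
      rw [hrt, Nat.fib_add_two]
      have e1 : Nat.fib (a.toNat - 1) ≤ Nat.fib b.toNat := Nat.fib_mono (by omega)
      have e2 : Nat.fib (a.toNat - 1 + 1) ≤ Nat.fib a.toNat := Nat.fib_mono (by omega)
      omega

lemma key (a b r : ℤ) (hr : 0 ≤ r) (h : r ≤ cdiv2 (a + b) + 1) :
    Nat.fib r.toNat ≤ 1 + (Nat.fib a.toNat + Nat.fib b.toNat) := by
  have h1 : r ≤ max a b + 1 := by
    have hle : cdiv2 (a + b) ≤ max a b := by
      rw [cdiv2, Int.ceil_le]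
      rw [div_le_iff₀ (by norm_num : (0:ℚ) < 2)]
      exact_mod_cast (show a + b ≤ max a b * 2 by omega)
    omega
  have h2 : 2 * r ≤ a + b + 3 := by
    have hc : (cdiv2 (a + b) : ℚ) < ((a + b : ℤ) : ℚ) / 2 + 1 := Int.ceil_lt_add_one _
    have hrq : (r : ℚ) ≤ (cdiv2 (a + b) : ℚ) + 1 := by exact_mod_cast h
    have : ((2 * r : ℤ) : ℚ) < ((a + b + 4 : ℤ) : ℚ) := by push_cast at hc hrq ⊢; linarith
    have : (2 * r : ℤ) < a + b + 4 := by exact_mod_cast this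
    omega
  rcases le_total b a with hab | hab
  · exact key' a b r hr hab (by omega) (by omega)
  · have := key' b a r hr hab (by omega) (by omega)
    omega

/-- The structural lemma: the size of a rank-labeled tree is at least
the Fibonacci number indexed by the rank of its root. -/
theorem structural_lemma (t : RTree) (h : t.Valid) :
    Nat.fib t.rank.toNat ≤ t.size := by
  suffices H : ∀ n (t : RTree), t.size ≤ n → t.Valid → Nat.fib t.rank.toNat ≤ t.size from
    H t.size t le_rfl h
  intro n
  induction n with
  | zero => intro t hle _; exact absurd hle (by have := size_pos t; omega)
  | succ n ih =>
    rintro ⟨r, cs⟩ hle hv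
    cases hv with
    | node _ _ hr hrank hcs =>
      have hsz : RTree.size (RTree.node r cs) = 1 + RTree.sizeList cs := by
        simp [RTree.size]
      have hszn : RTree.sizeList cs ≤ n := by omega
      have hmain : Nat.fib (lastRank cs 0).toNat + Nat.fib (lastRank cs 1).toNat ≤
          RTree.sizeList cs := by
        cases hrev : cs.reverse with
        | nil =>
          have e0 : lastRank cs 0 = -1 := by rw [lastRank, hrev]; rfl
          have e1 : lastRank cs 1 = -1 := by rw [lastRank, hrev]; rfl
          simp [e0, e1]
        | cons c0 tl =>
          have hc0 : c0 ∈ cs := List.mem_reverse.mp (by rw [hrev]; exact List.mem_cons_self)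
          have hc0s : c0.size ≤ RTree.sizeList cs := size_le_sizeList hc0
          have hc0f : Nat.fib c0.rank.toNat ≤ c0.size :=
            ih c0 (by omega) (hcs c0 hc0)
          have e0 : lastRank cs 0 = c0.rank := by rw [lastRank, hrev]; simp
          cases tl with
          | nil =>
            have e1 : lastRank cs 1 = -1 := by rw [lastRank, hrev]; rfl
            rw [e0, e1]
            simp
            omega
          | cons c1 tl' =>
            have e1 : lastRank cs 1 = c1.rank := by rw [lastRank, hrev]; simp
            have hsum : RTree.sizeList cs = c0.size + (c1.size + RTree.sizeList tl') := by
              rw [← sizeList_reverse cs, hrev]; rfl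
            have hc1 : c1 ∈ cs := List.mem_reverse.mp
              (by rw [hrev]; exact List.mem_cons_of_mem _ (List.mem_cons_self))
            have hc1f : Nat.fib c1.rank.toNat ≤ c1.size :=
              ih c1 (by have := size_le_sizeList hc1; omega) (hcs c1 hc1)
            rw [e0, e1]
            omega
      have hk := key (lastRank cs 0) (lastRank cs 1) r hr hrank
      show Nat.fib ((RTree.node r cs).rank).toNat ≤ _
      simp only [RTree.rank]
      omega
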